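/- arXiv:1511.05830 — 6 statements merged into one kernel-verified Lean document; each statement's English description precedes it below -/
import Mathlib

section
/- Let 𝔤 be a stratified Lie algebra of step r with layers 𝔤₁,…,𝔤_r, and let 𝔭₁, 𝔭₂, 𝔨, the projections and the curvature operator R be as in the context. Let A ∈ 𝔭₂ and C ∈ 𝔨 satisfy [A,[A,C]] = 0, and suppose A = Σ_{j=1}^n [B_j¹, B_j²] with B_j¹, B_j² ∈ 𝔭₁. Then Σ_{j=1}^n R(B_j¹,B_j²)C = −[A,C] and Σ_{j=1}^n R(B_j¹,B_j²)[A,C] = 0; consequently, for every positive definite symmetric bilinear form g on 𝔨, defining the action of an endomorphism T of 𝔨 on g by (T·g)(u,v) = −g(Tu,v) − g(u,Tv), one has Σ_{j=1}^n (R(B_j¹,B_j²)·g)(C,[A,C]) = g([A,C],[A,C]); in particular, if [A,C] ≠ 0, then the curvature operators R(·,·) do not all annihilate g. (This is the algebraic core of the 'only if' direction of Proposition 4.4.) -/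
/-! Setup: stratified (Carnot) Lie algebra of step `r` with layers `g k`,
the decomposition `𝔤 = 𝔭₁ ⊕ 𝔭₂ ⊕ 𝔨`, the associated projections, and the
curvature operator `R(A,B)C = ∇_A ∇_B C - ∇_B ∇_A C - ∇_[A,B] C` of the
vertical connection `∇_A C = ⁅pr₂ A, C⁆`. -/

variable {L : Type*} [LieRing L] [LieAlgebra ℝ L]

/-- The linear span of brackets of elements of two subspaces: `[S, T]`. -/
def bracketSpan (S T : Submodule ℝ L) : Submodule ℝ L :=
  Submodule.span ℝ {x : L | ∃ s ∈ S, ∃ t ∈ T, x = ⁅s, t⁆}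

/-- `𝔭₁`: the sum of the odd-degree layers. -/
def oddPart (g : ℕ → Submodule ℝ L) : Submodule ℝ L :=
  ⨆ k ∈ {k : ℕ | Odd k}, g k

/-- `𝔭₂`: the sum of the even-degree layers of degree at most `⌊r/2⌋`. -/
def evenLowPart (r : ℕ) (g : ℕ → Submodule ℝ L) : Submodule ℝ L :=
  ⨆ k ∈ {k : ℕ | Even k ∧ k ≤ r / 2}, g k

/-- `𝔨`: the sum of the even-degree layers of degree greater than `⌊r/2⌋`. -/
def evenHighPart (r : ℕ) (g : ℕ → Submodule ℝ L) : Submodule ℝ L :=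
  ⨆ k ∈ {k : ℕ | Even k ∧ r / 2 < k}, g k

/-- The curvature operator of the vertical connection `∇_A C = ⁅pr₂ A, C⁆`:
`R(A,B)C = ∇_A (∇_B C) - ∇_B (∇_A C) - ∇_{⁅A,B⁆} C`. -/
def curv (pr2 : L →ₗ[ℝ] L) (A B C : L) : L :=
  ⁅pr2 A, ⁅pr2 B, C⁆⁆ - ⁅pr2 B, ⁅pr2 A, C⁆⁆ - ⁅pr2 ⁅A, B⁆, C⁆

/-! ### Auxiliary lemmas -/

/-- Right bracket multiplication as a linear map. -/
def lmulR (C : L) : L →ₗ[ℝ] L where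
  toFun x := ⁅x, C⁆
  map_add' a b := add_lie a b C
  map_smul' t a := smul_lie t a C

/-- Left bracket multiplication as a linear map. -/
def lmulL (a : L) : L →ₗ[ℝ] L where
  toFun x := ⁅a, x⁆
  map_add' b c := lie_add a b c
  map_smul' t b := lie_smul t a b

@[simp] lemma lmulR_apply (C x : L) : lmulR C x = ⁅x, C⁆ := rfl
@[simp] lemma lmulL_apply (a x : L) : lmulL a x = ⁅a, x⁆ := rfl

lemma disjoint_biSup_of_disjoint {ι : Type*} (g : ι → Submodule ℝ L)
    (hind : iSupIndep g) {p q : ι → Prop} (hpq : ∀ i, p i → q i → False) :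
    Disjoint (⨆ i, ⨆ _ : p i, g i) (⨆ i, ⨆ _ : q i, g i) := by
  classical
  rw [Submodule.disjoint_def]
  intro x hx hy
  rw [Submodule.mem_biSup_iff_exists_dfinsupp] at hx hy
  obtain ⟨f, hf⟩ := hx
  obtain ⟨f', hf'⟩ := hy
  have hinj := hind.dfinsupp_lsum_injective
  have h : f.filter p = f'.filter q := hinj (hf.trans hf'.symm)
  have h0 : f.filter p = 0 := by
    ext i
    by_cases hp : p i
    · have hi := DFinsupp.ext_iff.mp h i
      have hq : ¬ q i := fun hq => hpq i hp hq
      simp only [DFinsupp.filter_apply, if_pos hp, if_neg hq] at hi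
      simp [DFinsupp.filter_apply, if_pos hp, hi]
    · simp [DFinsupp.filter_apply, if_neg hp]
  rw [h0, map_zero] at hf
  exact hf.symm

lemma bracket_mem_layer (r : ℕ) (g : ℕ → Submodule ℝ L)
    (hzero : ∀ m : ℕ, m = 0 ∨ r < m → g m = ⊥)
    (hstrat : ∀ k : ℕ, 1 ≤ k → k + 1 ≤ r → g (k + 1) = bracketSpan (g 1) (g k))
    (htop : ∀ a ∈ g 1, ∀ b ∈ g r, ⁅a, b⁆ = 0) :
    ∀ k m : ℕ, 1 ≤ m → ∀ a ∈ g k, ∀ b ∈ g m, ⁅a, b⁆ ∈ g (k + m) := by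
  intro k
  induction k using Nat.strong_induction_on with
  | _ k ih =>
  intro m hm a ha b hb
  match k, ih, ha with
  | 0, ih, ha =>
    rw [hzero 0 (Or.inl rfl), Submodule.mem_bot] at ha
    simp [ha]
  | 1, ih, ha =>
    by_cases hmr : m + 1 ≤ r
    · have hsp := hstrat m hm hmr
      have hmem : ⁅a, b⁆ ∈ bracketSpan (g 1) (g m) :=
        Submodule.subset_span ⟨a, ha, b, hb, rfl⟩
      rw [← hsp] at hmem
      have : m + 1 = 1 + m := by omega
      rwa [← this]
    · rcases lt_or_ge r m with h | h
      · rw [hzero m (Or.inr h), Submodule.mem_bot] at hb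
        simp [hb]
      · have hmr' : m = r := by omega
        subst hmr'
        rw [htop a ha b hb]
        exact zero_mem _
  | (k + 2), ih, ha =>
    by_cases hkr : k + 2 ≤ r
    · have key : ∀ x ∈ bracketSpan (g 1) (g (k + 1)), ⁅x, b⁆ ∈ g (k + 2 + m) := by
        intro x hx
        induction hx using Submodule.span_induction with
        | mem x hx =>
          obtain ⟨s, hs, t, ht, rfl⟩ := hx
          have h1 : ⁅t, b⁆ ∈ g (k + 1 + m) := ih (k + 1) (by omega) m hm t ht b hb
          have h2 : ⁅s, ⁅t, b⁆⁆ ∈ g (1 + (k + 1 + m)) :=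
            ih 1 (by omega) (k + 1 + m) (by omega) s hs _ h1
          have h3 : ⁅s, b⁆ ∈ g (1 + m) := ih 1 (by omega) m hm s hs b hb
          have h4 : ⁅t, ⁅s, b⁆⁆ ∈ g (k + 1 + (1 + m)) :=
            ih (k + 1) (by omega) (1 + m) (by omega) t ht _ h3
          have e1 : 1 + (k + 1 + m) = k + 2 + m := by omega
          have e2 : k + 1 + (1 + m) = k + 2 + m := by omega
          rw [e1] at h2
          rw [e2] at h4
          rw [lie_lie]
          exact sub_mem h2 h4
        | zero => simp
        | add u v hu hv hu' hv' => rw [add_lie]; exact add_mem hu' hv'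
        | smul t u hu hu' => rw [smul_lie]; exact Submodule.smul_mem _ _ hu'
      refine key a ?_
      rw [← hstrat (k + 1) (by omega) hkr]
      exact ha
    · rw [hzero (k + 2) (Or.inr (by omega)), Submodule.mem_bot] at ha
      simp [ha]

lemma bracket_p2_k (r : ℕ) (g : ℕ → Submodule ℝ L)
    (hzero : ∀ m : ℕ, m = 0 ∨ r < m → g m = ⊥)
    (hstrat : ∀ k : ℕ, 1 ≤ k → k + 1 ≤ r → g (k + 1) = bracketSpan (g 1) (g k))
    (htop : ∀ a ∈ g 1, ∀ b ∈ g r, ⁅a, b⁆ = 0) :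
    ∀ A ∈ evenLowPart r g, ∀ C ∈ evenHighPart r g, ⁅A, C⁆ ∈ evenHighPart r g := by
  have hlayer := bracket_mem_layer r g hzero hstrat htop
  have step1 : ∀ k : ℕ, Even k → ∀ a ∈ g k, ∀ C ∈ evenHighPart r g,
      ⁅a, C⁆ ∈ evenHighPart r g := by
    intro k hk a ha C hC
    have hle : evenHighPart r g ≤ Submodule.comap (lmulL a) (evenHighPart r g) := by
      refine iSup₂_le fun m hm => ?_
      intro c hc
      simp only [Submodule.mem_comap, lmulL_apply]
      rcases Nat.eq_zero_or_pos k with rfl | hk1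
      · rw [hzero 0 (Or.inl rfl), Submodule.mem_bot] at ha
        simp [ha]
      · have hm1 : 1 ≤ m := by
          have := hm.2
          omega
        have hmem : ⁅a, c⁆ ∈ g (k + m) := hlayer k m hm1 a ha c hc
        have hyp : (k + m) ∈ {k : ℕ | Even k ∧ r / 2 < k} := by
          refine ⟨hk.add hm.1, ?_⟩
          have := hm.2
          omega
        exact le_iSup₂ (f := fun k (_ : k ∈ {k : ℕ | Even k ∧ r / 2 < k}) => g k)
          (k + m) hyp hmem
    exact hle hC
  intro A hA C hC
  have hle : evenLowPart r g ≤ Submodule.comap (lmulR C) (evenHighPart r g) := by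
    refine iSup₂_le fun k hk => ?_
    intro a ha
    simp only [Submodule.mem_comap, lmulR_apply]
    exact step1 k hk.1 a ha C hC
  exact hle hA

theorem carnot_curvature_nonvanishing_of_p2_k_noncommute
    (r : ℕ) (hr : 1 ≤ r) (g : ℕ → Submodule ℝ L)
    (hzero : ∀ m : ℕ, m = 0 ∨ r < m → g m = ⊥)
    (hinternal : DirectSum.IsInternal g)
    (hstrat : ∀ k : ℕ, 1 ≤ k → k + 1 ≤ r →
      g (k + 1) = bracketSpan (g 1) (g k))
    (htop : ∀ a ∈ g 1, ∀ b ∈ g r, ⁅a, b⁆ = 0)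
    (pr1 pr2 prk : L →ₗ[ℝ] L)
    (hproj : ∀ A : L, pr1 A ∈ oddPart g ∧ pr2 A ∈ evenLowPart r g ∧
      prk A ∈ evenHighPart r g ∧ pr1 A + pr2 A + prk A = A)
    (A C : L) (hA : A ∈ evenLowPart r g) (hC : C ∈ evenHighPart r g)
    (hAAC : ⁅A, ⁅A, C⁆⁆ = 0)
    (n : ℕ) (B1 B2 : Fin n → L)
    (hB1 : ∀ j, B1 j ∈ oddPart g) (hB2 : ∀ j, B2 j ∈ oddPart g)
    (hsum : A = ∑ j, ⁅B1 j, B2 j⁆) :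
    (∑ j, curv pr2 (B1 j) (B2 j) C) = -⁅A, C⁆ ∧
    (∑ j, curv pr2 (B1 j) (B2 j) ⁅A, C⁆) = 0 ∧
    ∀ gf : L →ₗ[ℝ] L →ₗ[ℝ] ℝ,
      (∀ u ∈ evenHighPart r g, ∀ v ∈ evenHighPart r g, gf u v = gf v u) →
      (∀ u ∈ evenHighPart r g, u ≠ 0 → 0 < gf u u) →
      (∑ j, (-(gf (curv pr2 (B1 j) (B2 j) C) ⁅A, C⁆)
          - gf C (curv pr2 (B1 j) (B2 j) ⁅A, C⁆))) = gf ⁅A, C⁆ ⁅A, C⁆ ∧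
      (⁅A, C⁆ ≠ 0 →
        ¬ (∀ A' B' : L, ∀ u ∈ evenHighPart r g, ∀ v ∈ evenHighPart r g,
          -(gf (curv pr2 A' B' u) v) - gf u (curv pr2 A' B' v) = 0)) := by
  have hind := hinternal.submodule_iSupIndep
  -- the even part
  set E : Submodule ℝ L := ⨆ k, ⨆ _ : Even k, g k with hE
  have hp2E : evenLowPart r g ≤ E := biSup_mono fun k hk => hk.1
  have hkE : evenHighPart r g ≤ E := biSup_mono fun k hk => hk.1
  have hoddE : Disjoint (oddPart g) E :=
    disjoint_biSup_of_disjoint g hind fun i hi he => (Nat.not_odd_iff_even.mpr he) hi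
  have hp2k : Disjoint (evenLowPart r g) (evenHighPart r g) :=
    disjoint_biSup_of_disjoint g hind fun i hi hj => by
      have h1 := hi.2; have h2 := hj.2; omega
  -- pr2 vanishes on the odd part
  have hpr2odd : ∀ x ∈ oddPart g, pr2 x = 0 := by
    intro x hx
    obtain ⟨h1, h2, h3, h4⟩ := hproj x
    have hmemE : pr2 x + prk x ∈ E := add_mem (hp2E h2) (hkE h3)
    have heq : pr2 x + prk x = x - pr1 x := by
      rw [eq_sub_iff_add_eq]
      conv_rhs => rw [← h4]
      abel
    have hmemO : pr2 x + prk x ∈ oddPart g := by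
      rw [heq]; exact sub_mem hx h1
    have h0 : pr2 x + prk x = 0 := Submodule.disjoint_def.mp hoddE _ hmemO hmemE
    have hneg : pr2 x = -prk x := eq_neg_of_add_eq_zero_left h0
    have hmemK : pr2 x ∈ evenHighPart r g := by rw [hneg]; exact neg_mem h3
    exact Submodule.disjoint_def.mp hp2k _ h2 hmemK
  -- pr2 is the identity on 𝔭₂
  have hpr2A : pr2 A = A := by
    set F : Submodule ℝ L := ⨆ k, ⨆ _ : (Odd k ∨ r / 2 < k), g k with hF
    have hp1F : oddPart g ≤ F := biSup_mono fun k hk => Or.inl hk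
    have hkF : evenHighPart r g ≤ F := biSup_mono fun k hk => Or.inr hk.2
    have hp2F : Disjoint (evenLowPart r g) F :=
      disjoint_biSup_of_disjoint g hind fun i hi hj => by
        rcases hj with hj | hj
        · exact (Nat.not_odd_iff_even.mpr hi.1) hj
        · have := hi.2; omega
    obtain ⟨h1, h2, h3, h4⟩ := hproj A
    have hmemF : A - pr2 A ∈ F := by
      have heq : A - pr2 A = pr1 A + prk A := by
        rw [sub_eq_iff_eq_add]
        conv_lhs => rw [← h4]
        abel
      rw [heq]
      exact add_mem (hp1F h1) (hkF h3)
    have hmem2 : A - pr2 A ∈ evenLowPart r g := sub_mem hA h2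
    have h0 : A - pr2 A = 0 := Submodule.disjoint_def.mp hp2F _ hmem2 hmemF
    have := sub_eq_zero.mp h0
    exact this.symm
  have hpr2B1 : ∀ j, pr2 (B1 j) = 0 := fun j => hpr2odd _ (hB1 j)
  have hpr2B2 : ∀ j, pr2 (B2 j) = 0 := fun j => hpr2odd _ (hB2 j)
  have hAC : ⁅A, C⁆ ∈ evenHighPart r g :=
    bracket_p2_k r g hzero hstrat htop A hA C hC
  -- the curvature collapses
  have hcurv : ∀ (j : Fin n) (C' : L),
      curv pr2 (B1 j) (B2 j) C' = -⁅pr2 ⁅B1 j, B2 j⁆, C'⁆ := by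
    intro j C'
    simp [curv, hpr2B1 j, hpr2B2 j]
  have hsum1 : ∀ C' : L, (∑ j, curv pr2 (B1 j) (B2 j) C') = -⁅A, C'⁆ := by
    intro C'
    set N : L →ₗ[ℝ] L := -((lmulR C').comp pr2) with hN
    have hNx : ∀ x : L, N x = -⁅pr2 x, C'⁆ := fun x => rfl
    calc (∑ j, curv pr2 (B1 j) (B2 j) C') = ∑ j, N ⁅B1 j, B2 j⁆ := by
          refine Finset.sum_congr rfl fun j _ => ?_
          rw [hcurv j C', hNx]
      _ = N (∑ j, ⁅B1 j, B2 j⁆) := (map_sum N _ _).symm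
      _ = N A := by rw [← hsum]
      _ = -⁅A, C'⁆ := by rw [hNx, hpr2A]
  have hpart1 : (∑ j, curv pr2 (B1 j) (B2 j) C) = -⁅A, C⁆ := hsum1 C
  have hpart2 : (∑ j, curv pr2 (B1 j) (B2 j) ⁅A, C⁆) = 0 := by
    rw [hsum1 ⁅A, C⁆, hAAC, neg_zero]
  refine ⟨hpart1, hpart2, fun gf hsym hpos => ?_⟩
  have hkey : (∑ j, (-(gf (curv pr2 (B1 j) (B2 j) C) ⁅A, C⁆)
      - gf C (curv pr2 (B1 j) (B2 j) ⁅A, C⁆))) = gf ⁅A, C⁆ ⁅A, C⁆ := by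
    have e1 : (∑ j, (-(gf (curv pr2 (B1 j) (B2 j) C) ⁅A, C⁆)
        - gf C (curv pr2 (B1 j) (B2 j) ⁅A, C⁆)))
        = -((gf (∑ j, curv pr2 (B1 j) (B2 j) C)) ⁅A, C⁆)
          - gf C (∑ j, curv pr2 (B1 j) (B2 j) ⁅A, C⁆) := by
      rw [Finset.sum_sub_distrib, map_sum (gf C), map_sum gf, LinearMap.coe_sum,
        Finset.sum_apply, ← Finset.sum_neg_distrib]
    rw [e1, hpart1, hpart2, map_zero, sub_zero, map_neg, LinearMap.neg_apply, neg_neg]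
  refine ⟨hkey, fun hne hall => ?_⟩
  have hgt : 0 < gf ⁅A, C⁆ ⁅A, C⁆ := hpos _ hAC hne
  have hz : (∑ j, (-(gf (curv pr2 (B1 j) (B2 j) C) ⁅A, C⁆)
      - gf C (curv pr2 (B1 j) (B2 j) ⁅A, C⁆))) = 0 :=
    Finset.sum_eq_zero fun j _ => hall (B1 j) (B2 j) C hC ⁅A, C⁆ hAC
  rw [hkey] at hz
  rw [hz] at hgt
  exact lt_irrefl 0 hgt
end

section
/- Let 𝔤 be a stratified Lie algebra of step r with layers 𝔤₁,…,𝔤_r, and let 𝔭₁, 𝔭₂, 𝔨, the projections and the curvature operator R be as in the context. Then for all A, B ∈ 𝔭₁ and C ∈ 𝔨, one has R(A,B)C = [pr_{𝔭₂}[B,A], C]. -/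
/-! Setup: stratified (Carnot) Lie algebra of step `r` with layers `g k`,
the decomposition `𝔤 = 𝔭₁ ⊕ 𝔭₂ ⊕ 𝔨`, the associated projections, and the
curvature operator `R(A,B)C = ∇_A ∇_B C - ∇_B ∇_A C - ∇_[A,B] C` of the
vertical connection `∇_A C = ⁅pr₂ A, C⁆`. -/

variable {L : Type*} [LieRing L] [LieAlgebra ℝ L]

/-- Over disjoint index sets, the biSups of an independent family are disjoint. -/
lemma disjoint_biSup_biSup {R M : Type*} [CommRing R] [AddCommGroup M] [Module R M]
    {g : ℕ → Submodule R M} (hind : iSupIndep g)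
    {S T : Set ℕ} (hST : Disjoint S T) :
    Disjoint (⨆ k ∈ S, g k) (⨆ k ∈ T, g k) := by
  rw [Submodule.disjoint_def]
  intro x hxS hxT
  rw [Submodule.mem_iSup_iff_exists_finsupp] at hxS
  obtain ⟨f, hf, hsum⟩ := hxS
  have hf0 : ∀ j, f j = 0 := by
    intro j
    by_cases hjS : j ∈ S
    · have h1 : f j ∈ g j := by
        have := hf j
        rwa [iSup_pos hjS] at this
      have h2 : f j ∈ ⨆ (i) (_ : i ≠ j), g i := by
        have hx' : x ∈ ⨆ (i) (_ : i ≠ j), g i := by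
          refine (iSup₂_le fun k hk => ?_ : (⨆ k ∈ T, g k) ≤ _) hxT
          exact le_iSup₂ (f := fun i (_ : i ≠ j) => g i) k
            (fun h => hST.le_bot ⟨hjS, h ▸ hk⟩)
        have hrest : ∑ i ∈ f.support.erase j, f i ∈ ⨆ (i) (_ : i ≠ j), g i := by
          refine Submodule.sum_mem _ fun i hi => ?_
          have hij : i ≠ j := Finset.ne_of_mem_erase hi
          by_cases hiS : i ∈ S
          · have : f i ∈ g i := by have := hf i; rwa [iSup_pos hiS] at this
            exact (le_iSup₂ (f := fun i (_ : i ≠ j) => g i) i hij) this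
          · have : f i ∈ (⊥ : Submodule R M) := by
              have := hf i; rwa [iSup_neg hiS] at this
            rw [Submodule.mem_bot] at this
            rw [this]; exact Submodule.zero_mem _
        have hfj : f j = x - ∑ i ∈ f.support.erase j, f i := by
          by_cases hjs : j ∈ f.support
          · have h5 := Finset.add_sum_erase f.support f hjs
            rw [Finsupp.sum] at hsum
            rw [hsum] at h5
            exact eq_sub_of_add_eq h5
          · have hj0 : f j = 0 := Finsupp.notMem_support_iff.mp hjs
            rw [hj0, Finset.erase_eq_of_notMem hjs, Finsupp.sum] at *
            rw [hsum]; abel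
        rw [hfj]
        exact Submodule.sub_mem _ hx' hrest
      have := (hind j).le_bot ⟨h1, h2⟩
      simpa using this
    · have := hf j
      rwa [iSup_neg hjS, Submodule.mem_bot] at this
  rw [← hsum, Finsupp.sum]
  exact Finset.sum_eq_zero fun i _ => hf0 i

theorem carnot_curvature_on_p1_p1
    (r : ℕ) (hr : 1 ≤ r) (g : ℕ → Submodule ℝ L)
    (hzero : ∀ m : ℕ, m = 0 ∨ r < m → g m = ⊥)
    (hinternal : DirectSum.IsInternal g)
    (hstrat : ∀ k : ℕ, 1 ≤ k → k + 1 ≤ r →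
      g (k + 1) = bracketSpan (g 1) (g k))
    (htop : ∀ a ∈ g 1, ∀ b ∈ g r, ⁅a, b⁆ = 0)
    (pr1 pr2 prk : L →ₗ[ℝ] L)
    (hproj : ∀ A : L, pr1 A ∈ oddPart g ∧ pr2 A ∈ evenLowPart r g ∧
      prk A ∈ evenHighPart r g ∧ pr1 A + pr2 A + prk A = A)
 :
    ∀ A ∈ oddPart g, ∀ B ∈ oddPart g, ∀ C ∈ evenHighPart r g,
      curv pr2 A B C = ⁅pr2 ⁅B, A⁆, C⁆ := by
  classical
  -- key: pr2 vanishes on the odd part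
  have hodd_even : Disjoint (oddPart g : Submodule ℝ L)
      ((evenLowPart r g : Submodule ℝ L) ⊔ evenHighPart r g) := by
    have h1 : ((evenLowPart r g : Submodule ℝ L) ⊔ evenHighPart r g) ≤
        ⨆ k ∈ {k : ℕ | Even k}, g k := by
      refine sup_le ?_ ?_
      · exact iSup₂_le fun k hk => le_iSup₂ (f := fun k (_ : k ∈ {k : ℕ | Even k}) => g k) k hk.1
      · exact iSup₂_le fun k hk => le_iSup₂ (f := fun k (_ : k ∈ {k : ℕ | Even k}) => g k) k hk.1
    refine Disjoint.mono_right h1 ?_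
    refine disjoint_biSup_biSup hinternal.submodule_iSupIndep ?_
    rw [Set.disjoint_left]
    intro k hk hk'
    exact (Nat.not_even_iff_odd.mpr hk) hk'
  have hlow_high : Disjoint (evenLowPart r g : Submodule ℝ L) (evenHighPart r g) := by
    refine disjoint_biSup_biSup hinternal.submodule_iSupIndep ?_
    rw [Set.disjoint_left]
    intro k hk hk'
    exact absurd hk'.2 (not_lt.mpr hk.2)
  have key : ∀ A ∈ oddPart g, pr2 A = 0 := by
    intro A hA
    obtain ⟨h1, h2, h3, h4⟩ := hproj A
    have hmem : pr2 A + prk A ∈ (oddPart g : Submodule ℝ L) := by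
      have h4' : pr2 A + prk A + pr1 A = A := by
        rw [add_comm (pr2 A + prk A) (pr1 A), ← add_assoc]; exact h4
      have : pr2 A + prk A = A - pr1 A := eq_sub_of_add_eq h4'
      rw [this]
      exact Submodule.sub_mem _ hA h1
    have hmem2 : pr2 A + prk A ∈ ((evenLowPart r g : Submodule ℝ L) ⊔ evenHighPart r g) :=
      Submodule.add_mem _ (Submodule.mem_sup_left h2) (Submodule.mem_sup_right h3)
    have hz : pr2 A + prk A = 0 := by
      have := hodd_even.le_bot ⟨hmem, hmem2⟩
      simpa using this
    have h2' : pr2 A ∈ (evenHighPart r g : Submodule ℝ L) := by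
      have : pr2 A = -prk A := eq_neg_of_add_eq_zero_left hz
      rw [this]
      exact Submodule.neg_mem _ h3
    have := hlow_high.le_bot ⟨h2, h2'⟩
    simpa using this
  intro A hA B hB C _
  have hA2 : pr2 A = 0 := key A hA
  have hB2 : pr2 B = 0 := key B hB
  have hBA : ⁅B, A⁆ = -⁅A, B⁆ := by rw [← lie_skew]
  rw [curv, hA2, hB2, hBA, map_neg, neg_lie]
  simp
end

section
/- Let 𝔤 be a stratified Lie algebra of step r with layers 𝔤₁,…,𝔤_r, and let 𝔭₁, 𝔭₂, 𝔨, the projections and the curvature operator R be as in the context. Then for all A ∈ 𝔤, B ∈ 𝔭₂ ⊕ 𝔨 and C ∈ 𝔨, one has R(A,B)C = 0. -/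
/-! Setup: stratified (Carnot) Lie algebra of step `r` with layers `g k`,
the decomposition `𝔤 = 𝔭₁ ⊕ 𝔭₂ ⊕ 𝔨`, the associated projections, and the
curvature operator `R(A,B)C = ∇_A ∇_B C - ∇_B ∇_A C - ∇_[A,B] C` of the
vertical connection `∇_A C = ⁅pr₂ A, C⁆`. -/

variable {L : Type*} [LieRing L] [LieAlgebra ℝ L]

section Helpers

/-- Induction principle for membership in a `biSup` of submodules. -/
lemma biSup_induction_aux (g : ℕ → Submodule ℝ L) (S : Set ℕ) {motive : L → Prop}
    {x : L} (hx : x ∈ ⨆ k ∈ S, g k)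
    (mem : ∀ k ∈ S, ∀ y ∈ g k, motive y) (zero : motive 0)
    (add : ∀ y z, motive y → motive z → motive (y + z)) : motive x := by
  refine Submodule.iSup_induction (motive := motive) (fun k => ⨆ _ : k ∈ S, g k) hx ?_ zero add
  intro k y hy
  by_cases hk : k ∈ S
  · exact mem k hk y (by simpa [iSup_pos hk] using hy)
  · have hy0 : y = 0 := by simpa [iSup_neg hk] using hy
    rw [hy0]; exact zero

/-- The graded bracket property: `⁅g i, g j⁆ ⊆ g (i+j)`. -/
lemma bracket_grade_aux (r : ℕ) (g : ℕ → Submodule ℝ L)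
    (hzero : ∀ m : ℕ, m = 0 ∨ r < m → g m = ⊥)
    (hstrat : ∀ k : ℕ, 1 ≤ k → k + 1 ≤ r →
      g (k + 1) = bracketSpan (g 1) (g k))
    (htop : ∀ a ∈ g 1, ∀ b ∈ g r, ⁅a, b⁆ = 0) :
    ∀ i j : ℕ, ∀ a ∈ g i, ∀ b ∈ g j, ⁅a, b⁆ ∈ g (i + j) := by
  intro i
  induction i using Nat.strong_induction_on with
  | _ i ih =>
    match i with
    | 0 =>
      intro j a ha b hb
      rw [hzero 0 (Or.inl rfl), Submodule.mem_bot] at ha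
      rw [ha, zero_lie]
      exact zero_mem _
    | 1 =>
      intro j a ha b hb
      rcases Nat.lt_or_ge j 1 with hj | hj
      · interval_cases j
        rw [hzero 0 (Or.inl rfl), Submodule.mem_bot] at hb
        rw [hb, lie_zero]; exact zero_mem _
      by_cases hjr : j + 1 ≤ r
      · have : (1 + j) = j + 1 := by omega
        rw [this, hstrat j hj hjr]
        exact Submodule.subset_span ⟨a, ha, b, hb, rfl⟩
      · by_cases hjr2 : j = r
        · subst hjr2
          rw [htop a ha b hb]; exact zero_mem _
        · rw [hzero j (Or.inr (by omega)), Submodule.mem_bot] at hb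
          rw [hb, lie_zero]; exact zero_mem _
    | (k+2) =>
      intro j a ha b hb
      by_cases hbig : r < k + 2
      · rw [hzero _ (Or.inr hbig), Submodule.mem_bot] at ha
        rw [ha, zero_lie]; exact zero_mem _
      · rw [hstrat (k+1) (by omega) (by omega)] at ha
        refine Submodule.span_induction ?_ ?_ ?_ ?_ ha
        · rintro x ⟨u, hu, v, hv, rfl⟩
          rw [lie_lie]
          refine sub_mem ?_ ?_
          · have h1 : ⁅v, b⁆ ∈ g (k + 1 + j) := ih (k+1) (by omega) j v hv b hb
            have h2 : ⁅u, ⁅v, b⁆⁆ ∈ g (1 + (k + 1 + j)) := ih 1 (by omega) _ u hu _ h1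
            have : 1 + (k + 1 + j) = k + 2 + j := by omega
            rwa [this] at h2
          · have h1 : ⁅u, b⁆ ∈ g (1 + j) := ih 1 (by omega) j u hu b hb
            have h2 : ⁅v, ⁅u, b⁆⁆ ∈ g (k + 1 + (1 + j)) := ih (k+1) (by omega) _ v hv _ h1
            have : k + 1 + (1 + j) = k + 2 + j := by omega
            rwa [this] at h2
        · rw [zero_lie]; exact zero_mem _
        · intro x y _ _ hx hy
          rw [add_lie]; exact add_mem hx hy
        · intro c x _ hx
          rw [smul_lie]; exact Submodule.smul_mem _ _ hx

/-- Bracket of two biSups lands in `M` whenever each graded piece does. -/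
lemma biSup_bracket_aux (g : ℕ → Submodule ℝ L)
    (hgrade : ∀ i j : ℕ, ∀ a ∈ g i, ∀ b ∈ g j, ⁅a, b⁆ ∈ g (i + j))
    (S T : Set ℕ) (M : Submodule ℝ L) (h : ∀ i ∈ S, ∀ j ∈ T, g (i + j) ≤ M) :
    ∀ x ∈ (⨆ k ∈ S, g k), ∀ y ∈ (⨆ k ∈ T, g k), ⁅x, y⁆ ∈ M := by
  intro x hx
  refine biSup_induction_aux g S
    (motive := fun x => ∀ y ∈ (⨆ k ∈ T, g k), ⁅x, y⁆ ∈ M) hx ?_ ?_ ?_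
  · intro i hi a ha y hy
    refine biSup_induction_aux g T (motive := fun y => ⁅a, y⁆ ∈ M) hy ?_ ?_ ?_
    · intro j hj b hb
      exact h i hi j hj (hgrade i j a ha b hb)
    · show ⁅a, (0 : L)⁆ ∈ M
      rw [lie_zero]; exact zero_mem _
    · intro y z hy hz
      show ⁅a, y + z⁆ ∈ M
      rw [lie_add]; exact add_mem hy hz
  · intro y hy
    show ⁅(0 : L), y⁆ ∈ M
    rw [zero_lie]; exact zero_mem _
  · intro u v hu hv y hy
    show ⁅u + v, y⁆ ∈ M
    rw [add_lie]; exact add_mem (hu y hy) (hv y hy)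

/-- Disjointness of biSups over disjoint index sets, from independence. -/
lemma disjoint_biSup_biSup_aux (g : ℕ → Submodule ℝ L) (hind : iSupIndep g)
    (p q : ℕ → Prop) (hpq : ∀ k, p k → q k → False) :
    Disjoint (⨆ k ∈ {k : ℕ | p k}, g k) (⨆ k ∈ {k : ℕ | q k}, g k) := by
  classical
  rw [Submodule.disjoint_def]
  intro x hx hx'
  obtain ⟨f, hf⟩ := (Submodule.mem_biSup_iff_exists_dfinsupp p g x).mp hx
  obtain ⟨f', hf'⟩ := (Submodule.mem_biSup_iff_exists_dfinsupp q g x).mp hx'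
  have heq : f.filter p = f'.filter q :=
    hind.dfinsupp_lsum_injective (by rw [hf, hf'])
  have hz : f.filter p = 0 := by
    ext i
    by_cases hi : p i
    · have h1 := DFinsupp.ext_iff.mp heq i
      rw [DFinsupp.filter_apply_neg f' (fun h => hpq i hi h)] at h1
      rw [h1]; simp
    · rw [DFinsupp.filter_apply_neg f hi]; simp
  rw [← hf, hz, map_zero]

end Helpers

theorem carnot_curvature_vanishes_on_p2_k
    (r : ℕ) (hr : 1 ≤ r) (g : ℕ → Submodule ℝ L)
    (hzero : ∀ m : ℕ, m = 0 ∨ r < m → g m = ⊥)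
    (hinternal : DirectSum.IsInternal g)
    (hstrat : ∀ k : ℕ, 1 ≤ k → k + 1 ≤ r →
      g (k + 1) = bracketSpan (g 1) (g k))
    (htop : ∀ a ∈ g 1, ∀ b ∈ g r, ⁅a, b⁆ = 0)
    (pr1 pr2 prk : L →ₗ[ℝ] L)
    (hproj : ∀ A : L, pr1 A ∈ oddPart g ∧ pr2 A ∈ evenLowPart r g ∧
      prk A ∈ evenHighPart r g ∧ pr1 A + pr2 A + prk A = A)
 :
    ∀ A : L, ∀ B ∈ evenLowPart r g ⊔ evenHighPart r g, ∀ C ∈ evenHighPart r g,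
      curv pr2 A B C = 0 := by
  have hgrade := bracket_grade_aux r g hzero hstrat htop
  have hle : ∀ (S : Set ℕ) (k : ℕ), k ∈ S → g k ≤ ⨆ k ∈ S, g k :=
    fun S k hk => le_iSup₂ (f := fun k _ => g k) k hk
  -- uniqueness of the pr2-component
  have huniq : ∀ X x y z : L, x ∈ oddPart g → y ∈ evenLowPart r g →
      z ∈ evenHighPart r g → x + y + z = X → pr2 X = y := by
    intro X x y z hx hy hz hsum
    obtain ⟨h1, h2, h3, h4⟩ := hproj X
    have h5 : x + y + z = pr1 X + pr2 X + prk X := hsum.trans h4.symm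
    have key : y - pr2 X = (pr1 X - x) + (prk X - z) := by
      rw [show (pr1 X - x) + (prk X - z)
            = (pr1 X + pr2 X + prk X) - (x + z + pr2 X) from by abel, ← h5]
      abel
    have hmem : y - pr2 X ∈ oddPart g ⊔ evenHighPart r g := by
      rw [key]
      exact add_mem (Submodule.mem_sup_left (sub_mem h1 hx))
        (Submodule.mem_sup_right (sub_mem h3 hz))
    have hdisj : Disjoint (evenLowPart r g) (oddPart g ⊔ evenHighPart r g) := by
      have hd := disjoint_biSup_biSup_aux g hinternal.submodule_iSupIndep
          (fun k => Even k ∧ k ≤ r / 2)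
          (fun k => Odd k ∨ (Even k ∧ r / 2 < k)) (by
            rintro k ⟨hke, hkl⟩ (hk2 | ⟨_, hk2⟩)
            · exact (Nat.not_odd_iff_even.mpr hke) hk2
            · omega)
      have hset : {k : ℕ | Odd k ∨ (Even k ∧ r / 2 < k)}
          = {k : ℕ | Odd k} ∪ {k : ℕ | Even k ∧ r / 2 < k} := by
        ext k; simp [Set.mem_setOf_eq, Set.mem_union]
      rw [hset, iSup_union] at hd
      exact hd
    have h0 : y - pr2 X = 0 :=
      (Submodule.disjoint_def.mp hdisj) _ (sub_mem hy h2) hmem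
    exact (sub_eq_zero.mp h0).symm
  -- the even part
  have hlowle : evenLowPart r g ≤ ⨆ k ∈ {k : ℕ | Even k}, g k :=
    iSup₂_le fun k hk => hle _ k hk.1
  have hhighle : evenHighPart r g ≤ ⨆ k ∈ {k : ℕ | Even k}, g k :=
    iSup₂_le fun k hk => hle _ k hk.1
  -- bracket inclusions
  have hOE : ∀ x ∈ oddPart g, ∀ y ∈ (⨆ k ∈ {k : ℕ | Even k}, g k),
      ⁅x, y⁆ ∈ oddPart g := by
    refine biSup_bracket_aux g hgrade _ _ _ ?_
    intro i hi j hj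
    exact hle _ _ (hi.add_even hj)
  have hLL : ∀ x ∈ evenLowPart r g, ∀ y ∈ evenLowPart r g,
      ⁅x, y⁆ ∈ evenLowPart r g ⊔ evenHighPart r g := by
    refine biSup_bracket_aux g hgrade _ _ _ ?_
    rintro i ⟨hie, hil⟩ j ⟨hje, hjl⟩
    by_cases h : i + j ≤ r / 2
    · exact le_trans (hle {k : ℕ | Even k ∧ k ≤ r / 2} _ ⟨hie.add hje, h⟩) le_sup_left
    · exact le_trans (hle {k : ℕ | Even k ∧ r / 2 < k} _ ⟨hie.add hje, by omega⟩) le_sup_right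
  have hLH : ∀ x ∈ evenLowPart r g, ∀ y ∈ evenHighPart r g,
      ⁅x, y⁆ ∈ evenHighPart r g := by
    refine biSup_bracket_aux g hgrade _ _ _ ?_
    rintro i ⟨hie, _⟩ j ⟨hje, hjh⟩
    exact hle _ _ ⟨hie.add hje, by omega⟩
  have hHE : ∀ x ∈ evenHighPart r g, ∀ y ∈ (⨆ k ∈ {k : ℕ | Even k}, g k),
      ⁅x, y⁆ ∈ evenHighPart r g := by
    refine biSup_bracket_aux g hgrade _ _ _ ?_
    rintro i ⟨hie, hih⟩ j hje
    exact hle _ _ ⟨hie.add hje, by omega⟩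
  have hHH : ∀ x ∈ evenHighPart r g, ∀ y ∈ evenHighPart r g, ⁅x, y⁆ = 0 := by
    intro x hx y hy
    have h0 : ⁅x, y⁆ ∈ (⊥ : Submodule ℝ L) := by
      refine biSup_bracket_aux g hgrade _ _ ⊥ ?_ x hx y hy
      rintro i ⟨hie, hih⟩ j ⟨hje, hjh⟩
      exact le_of_eq (hzero (i + j) (Or.inr (by omega)))
    simpa using h0
  -- main computation
  intro A B hB C hC
  obtain ⟨B₂, hB₂, Bk, hBk, hBsum⟩ := Submodule.mem_sup.mp hB
  obtain ⟨hA1, hA2, hAk, hAsum⟩ := hproj A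
  have hBmem : B ∈ ⨆ k ∈ {k : ℕ | Even k}, g k := by
    rw [← hBsum]; exact add_mem (hlowle hB₂) (hhighle hBk)
  obtain ⟨E₂, hE₂, Ek, hEk, hEsum⟩ := Submodule.mem_sup.mp (hLL _ hA2 _ hB₂)
  have hpr2B : pr2 B = B₂ := by
    refine huniq B 0 B₂ Bk (zero_mem _) hB₂ hBk ?_
    rw [zero_add]; exact hBsum
  have hmid : ⁅pr2 A, B⁆ = E₂ + Ek + ⁅pr2 A, Bk⁆ := by
    rw [← hBsum, lie_add, ← hEsum]
  have hAB : ⁅A, B⁆ = ⁅pr1 A, B⁆ + (E₂ + Ek + ⁅pr2 A, Bk⁆) + ⁅prk A, B⁆ := by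
    conv_lhs => rw [← hAsum]
    rw [add_lie, add_lie, hmid]
  have hpr2AB : pr2 ⁅A, B⁆ = E₂ := by
    refine huniq ⁅A, B⁆ ⁅pr1 A, B⁆ E₂ (Ek + ⁅pr2 A, Bk⁆ + ⁅prk A, B⁆)
      (hOE _ hA1 _ hBmem) hE₂
      (add_mem (add_mem hEk (hLH _ hA2 _ hBk)) (hHE _ hAk _ hBmem)) ?_
    rw [hAB]; abel
  have hEkC : ⁅Ek, C⁆ = 0 := hHH _ hEk _ hC
  unfold curv
  rw [hpr2B, hpr2AB, ← lie_lie, ← hEsum, add_lie, hEkC]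
  abel
end

section
/- Let 𝔤 be a stratified Lie algebra of step r with layers 𝔤₁,…,𝔤_r, and let 𝔭₁, 𝔭₂, 𝔨 be as in the context. Set 𝔭 = 𝔭₁ ⊕ 𝔭₂. Then 𝔭 + [𝔭,𝔭] = 𝔤. (In Proposition 4.4 this expresses that the subbundle D obtained by left translation of 𝔭 is bracket-generating and equiregular of step 2.) -/
/-! Setup: stratified (Carnot) Lie algebra of step `r` with layers `g k`,
the decomposition `𝔤 = 𝔭₁ ⊕ 𝔭₂ ⊕ 𝔨`, the associated projections, and the
curvature operator `R(A,B)C = ∇_A ∇_B C - ∇_B ∇_A C - ∇_[A,B] C` of the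
vertical connection `∇_A C = ⁅pr₂ A, C⁆`. -/

variable {L : Type*} [LieRing L] [LieAlgebra ℝ L]

theorem bracketSpan_mono {S S' T T' : Submodule ℝ L} (hS : S ≤ S') (hT : T ≤ T') :
    bracketSpan S T ≤ bracketSpan S' T' := by
  apply Submodule.span_mono
  rintro x ⟨s, hs, t, ht, rfl⟩
  exact ⟨s, hS hs, t, hT ht, rfl⟩

theorem le_oddPart (g : ℕ → Submodule ℝ L) {k : ℕ} (hk : Odd k) : g k ≤ oddPart g :=
  le_biSup g hk

theorem le_evenLowPart (r : ℕ) (g : ℕ → Submodule ℝ L) {k : ℕ} (hk : Even k ∧ k ≤ r / 2) :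
    g k ≤ evenLowPart r g :=
  le_biSup g hk

theorem carnot_p_bracket_generating_step_two
    (r : ℕ) (hr : 1 ≤ r) (g : ℕ → Submodule ℝ L)
    (hzero : ∀ m : ℕ, m = 0 ∨ r < m → g m = ⊥)
    (hinternal : DirectSum.IsInternal g)
    (hstrat : ∀ k : ℕ, 1 ≤ k → k + 1 ≤ r →
      g (k + 1) = bracketSpan (g 1) (g k))
    (htop : ∀ a ∈ g 1, ∀ b ∈ g r, ⁅a, b⁆ = 0)
 :
    (oddPart g ⊔ evenLowPart r g) ⊔
      bracketSpan (oddPart g ⊔ evenLowPart r g) (oddPart g ⊔ evenLowPart r g) = ⊤ := by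

  have key : ∀ k, g k ≤ (oddPart g ⊔ evenLowPart r g) ⊔
      bracketSpan (oddPart g ⊔ evenLowPart r g) (oddPart g ⊔ evenLowPart r g) := by
    intro k
    rcases Nat.even_or_odd k with hk | hk
    · rcases le_or_gt k (r / 2) with hle | hlt
      · exact le_trans (le_evenLowPart r g ⟨hk, hle⟩) (le_sup_of_le_left le_sup_right)
      · rcases le_or_gt k r with hkr | hkr
        · obtain ⟨m, rfl⟩ : ∃ m, k = m + 1 := ⟨k - 1, by omega⟩
          have hm1 : 1 ≤ m := by
            rcases hk with ⟨j, hj⟩; omega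
          have hodd : Odd m := by
            rcases hk with ⟨j, hj⟩; exact ⟨j - 1, by omega⟩
          rw [hstrat m hm1 hkr]
          refine le_sup_of_le_right (bracketSpan_mono ?_ ?_)
          · exact le_sup_of_le_left (le_oddPart g odd_one)
          · exact le_sup_of_le_left (le_oddPart g hodd)
        · rw [hzero k (Or.inr hkr)]; exact bot_le
    · exact le_trans (le_oddPart g hk) (le_sup_of_le_left le_sup_left)
  rw [eq_top_iff, ← hinternal.submodule_iSup_eq_top]
  exact iSup_le key
end

section
/- Let 𝔤 be a Lie algebra over ℝ, let 𝔨 ⊆ 𝔤 be a Lie subalgebra, and let 𝔭 ⊆ 𝔤 be a linear subspace such that 𝔤 = 𝔭 ⊕ 𝔨 (direct sum of subspaces) and [k,p] ∈ 𝔭 for all k ∈ 𝔨, p ∈ 𝔭. Define ∇_A C = pr_𝔨[A,C] for A ∈ 𝔤, C ∈ 𝔨, and the curvature R(A,B)C = ∇_A(∇_B C) − ∇_B(∇_A C) − ∇_{[A,B]}C. Then for all A, B ∈ 𝔤 and C ∈ 𝔨, one has R(A,B)C = −[pr_𝔨[pr_𝔭 A, pr_𝔭 B], C]. (This is the curvature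 formula of Section 4.2, case (b), for a reductive complement.) -/
/-- Curvature formula for the vertical connection `∇_A C = pr_𝔨 ⁅A, C⁆` associated
with a decomposition `𝔤 = 𝔭 ⊕ 𝔨` where `𝔨` is a Lie subalgebra and `⁅𝔨, 𝔭⁆ ⊆ 𝔭`:
`R(A,B)C = -⁅pr_𝔨 ⁅pr_𝔭 A, pr_𝔭 B⁆, C⁆`. -/
theorem reductive_vertical_curvature_formula {L : Type*} [LieRing L] [LieAlgebra ℝ L]
    (k : LieSubalgebra ℝ L) (p : Submodule ℝ L)
    (prp prk : L →ₗ[ℝ] L)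
    (hproj : ∀ A : L, prp A ∈ p ∧ prk A ∈ k ∧ prp A + prk A = A)
    (hdisj : ∀ A : L, A ∈ p → A ∈ k → A = 0)
    (hred : ∀ x ∈ k, ∀ y ∈ p, ⁅x, y⁆ ∈ p) :
    ∀ A B : L, ∀ C ∈ k,
      prk ⁅A, prk ⁅B, C⁆⁆ - prk ⁅B, prk ⁅A, C⁆⁆ - prk ⁅⁅A, B⁆, C⁆ =
        -⁅prk ⁅prp A, prp B⁆, C⁆ := by
  -- prk is the identity on k
  have hk : ∀ x ∈ k, prk x = x := by
    intro x hx
    obtain ⟨h1, h2, h3⟩ := hproj x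
    have hpk : prp x ∈ k := by
      have hx' : prp x = x - prk x := by
        rw [eq_sub_iff_add_eq]; exact h3
      rw [hx']; exact k.sub_mem hx h2
    have h0 : prp x = 0 := hdisj _ h1 hpk
    rw [h0, zero_add] at h3
    exact h3
  -- prk vanishes on p
  have hp : ∀ x ∈ p, prk x = 0 := by
    intro x hx
    obtain ⟨h1, h2, h3⟩ := hproj x
    have hkp : prk x ∈ p := by
      have hx' : prk x = x - prp x := by
        rw [eq_sub_iff_add_eq, add_comm]; exact h3
      rw [hx']; exact p.sub_mem hx h1
    exact hdisj _ hkp h2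
  -- ⁅k, p⁆ ⊆ p in the other order
  have hred' : ∀ x ∈ p, ∀ y ∈ k, (⁅x, y⁆ : L) ∈ p := by
    intro x hx y hy
    have h := p.neg_mem (hred y hy x hx)
    rwa [← lie_skew, neg_neg] at h
  -- key: prk ⁅D, C⁆ = ⁅prk D, C⁆ for C ∈ k
  have key : ∀ D : L, ∀ C ∈ k, prk ⁅D, C⁆ = ⁅prk D, C⁆ := by
    intro D C hC
    obtain ⟨h1, h2, h3⟩ := hproj D
    have hsplit : (⁅D, C⁆ : L) = ⁅prp D, C⁆ + ⁅prk D, C⁆ := by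
      rw [← add_lie, h3]
    rw [hsplit, map_add, hp _ (hred' _ h1 _ hC), hk _ (k.lie_mem h2 hC), zero_add]
  intro A B C hC
  obtain ⟨hA1, hA2, hA3⟩ := hproj A
  obtain ⟨hB1, hB2, hB3⟩ := hproj B
  have e1 : prk ⁅A, prk ⁅B, C⁆⁆ = ⁅prk A, ⁅prk B, C⁆⁆ := by
    rw [key B C hC, key A _ (k.lie_mem hB2 hC)]
  have e2 : prk ⁅B, prk ⁅A, C⁆⁆ = ⁅prk B, ⁅prk A, C⁆⁆ := by
    rw [key A C hC, key B _ (k.lie_mem hA2 hC)]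
  have eAB : prk ⁅A, B⁆ = prk ⁅prp A, prp B⁆ + ⁅prk A, prk B⁆ := by
    have hexp : (⁅A, B⁆ : L)
        = ⁅prp A, prp B⁆ + ⁅prp A, prk B⁆ + ⁅prk A, prp B⁆ + ⁅prk A, prk B⁆ := by
      conv_lhs => rw [← hA3, ← hB3]
      rw [add_lie, lie_add, lie_add]
      abel
    rw [hexp, map_add, map_add, map_add, hp _ (hred' _ hA1 _ hB2),
      hp _ (hred _ hA2 _ hB1), hk _ (k.lie_mem hA2 hB2), add_zero, add_zero]
  have e3 : prk ⁅⁅A, B⁆, C⁆ = ⁅prk ⁅prp A, prp B⁆, C⁆ + ⁅⁅prk A, prk B⁆, C⁆ := by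
    rw [key _ C hC, eAB, add_lie]
  rw [e1, e2, e3, lie_lie]
  abel
end

section
/- On ℝ⁴ with coordinates (x,y,z,w), let X and Y be the vector fields X(x,y,z,w) = (1,0,0,0) and Y(x,y,z,w) = (0,1,xw,−xz) (that is, X = ∂/∂x and Y = ∂/∂y + x(w ∂/∂z − z ∂/∂w)), and let D_p = span_ℝ{X(p), Y(p)} for p ∈ ℝ⁴. If γ = (γ₁,γ₂,γ₃,γ₄) : [0,1] → ℝ⁴ is a differentiable curve such that γ′(t) ∈ D_{γ(t)} for every t ∈ [0,1], then the function t ↦ γ₃(t)² + γ₄(t)² is constant on [0,1]. (This is the key computation behind the example of Remark 2.4 (b): every D-horizontal curve starting from a point with (z,w) ≠ (0,0) remains in the cylinder {z² + w² = const}.) -/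
/-- On `ℝ⁴` with coordinates `(x, y, z, w)`, let `D` be spanned by the vector
fields `X = (1,0,0,0)` and `Y = (0,1,xw,-xz)`. Along any differentiable
`D`-horizontal curve `γ : [0,1] → ℝ⁴`, the quantity `z² + w²` is constant. -/
theorem horizontal_curve_preserves_zw_radius
    (γ : ℝ → (Fin 4 → ℝ)) (γ' : ℝ → (Fin 4 → ℝ))
    (hderiv : ∀ t ∈ Set.Icc (0 : ℝ) 1, HasDerivAt γ (γ' t) t)
    (hhor : ∀ t ∈ Set.Icc (0 : ℝ) 1,
      γ' t ∈ Submodule.span ℝ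
        {(![1, 0, 0, 0] : Fin 4 → ℝ),
         ![0, 1, γ t 0 * γ t 3, -(γ t 0 * γ t 2)]}) :
    ∀ t ∈ Set.Icc (0 : ℝ) 1,
      (γ t 2) ^ 2 + (γ t 3) ^ 2 = (γ 0 2) ^ 2 + (γ 0 3) ^ 2 := by
  set f : ℝ → ℝ := fun t => (γ t 2) ^ 2 + (γ t 3) ^ 2 with hf
  have key : ∀ t ∈ Set.Icc (0 : ℝ) 1, HasDerivAt f 0 t := by
    intro t ht
    have h2 : HasDerivAt (fun s => γ s 2) (γ' t 2) t :=
      (hasDerivAt_pi.mp (hderiv t ht)) 2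
    have h3 : HasDerivAt (fun s => γ s 3) (γ' t 3) t :=
      (hasDerivAt_pi.mp (hderiv t ht)) 3
    have hD := hhor t ht
    rw [Submodule.mem_span_pair] at hD
    obtain ⟨a, b, hab⟩ := hD
    have h2' : γ' t 2 = b * (γ t 0 * γ t 3) := by
      have := congrFun hab 2
      simp [Matrix.cons_val_zero, Matrix.cons_val_one] at this
      linarith [this]
    have h3' : γ' t 3 = -(b * (γ t 0 * γ t 2)) := by
      have := congrFun hab 3
      simp at this
      linarith [this]
    have : HasDerivAt f (2 * γ t 2 * γ' t 2 + 2 * γ t 3 * γ' t 3) t := by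
      exact (by simpa using ((h2.pow 2).add (h3.pow 2)) : HasDerivAt ((fun s => γ s 2) ^ 2 + (fun s => γ s 3) ^ 2) (2 * γ t 2 * γ' t 2 + 2 * γ t 3 * γ' t 3) t)
    convert this using 1
    rw [h2', h3']; ring
  have hmvt := constant_of_has_deriv_right_zero
    (f := f) (a := 0) (b := 1)
    (fun t ht => (key t ht).continuousAt.continuousWithinAt)
    (fun t ht => ((key t (Set.mem_Icc_of_Ico ht)).hasDerivWithinAt))
  exact hmvt
end
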